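/- Fix t₀ ∈ ℂ and a₅ ∈ ℂ, and define g : ℂ ∖ {t₀} → ℂ by g(t) = (t − t₀)⁻¹ − (t₀/20)(t − t₀)³ − (1/12)(t − t₀)⁴ + a₅(t − t₀)⁵. Then the residual r(t) := g(t)·g''(t) + (g'(t))² − 3g(t)⁴ − t/2 satisfies r(t)/(t − t₀)² → 0 as t → t₀ with t ≠ t₀ (i.e. r(t) = o((t − t₀)²)); in particular the displayed coefficients are exactly those forced by equation (DPIB), with a₅ a free parameter at the resonance. -/

import Mathlib

open Filter Topology

noncomputable def DPIB_P (t₀ a₅ s : ℂ) : ℂ :=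
  (-3/400) * t₀^2 + (1/40) * t₀ * s + -1 * t₀ * a₅ * s^2 + (5/72) * s^2 + -3 * a₅ * s^3
  + 27 * a₅^2 * s^4 + (3/2000) * t₀^3 * s^4 + (3/400) * t₀^2 * s^5
  + (-9/100) * t₀^2 * a₅ * s^6 + (1/80) * t₀ * s^6 + (-3/10) * t₀ * a₅ * s^7
  + (1/144) * s^7 + (9/5) * t₀ * a₅^2 * s^8 + (-1/4) * a₅ * s^8
  + (-3/160000) * t₀^4 * s^8 + 3 * a₅^2 * s^9 + (-1/8000) * t₀^3 * s^9
  + -12 * a₅^3 * s^10 + (3/2000) * t₀^3 * a₅ * s^10 + (-1/3200) * t₀^2 * s^10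
  + (3/400) * t₀^2 * a₅ * s^11 + (-1/2880) * t₀ * s^11 + (-9/200) * t₀^2 * a₅^2 * s^12
  + (1/80) * t₀ * a₅ * s^12 + (-1/6912) * s^12 + (-3/20) * t₀ * a₅^2 * s^13
  + (1/144) * a₅ * s^13 + (3/5) * t₀ * a₅^3 * s^14 + (-1/8) * a₅^2 * s^14
  + 1 * a₅^3 * s^15 + -3 * a₅^4 * s^16

set_option maxHeartbeats 2000000 in
/-- The truncated series (formal.sol2) for equation (DPIB):
g(t) = (t−t₀)⁻¹ − (t₀/20)(t−t₀)³ − (1/12)(t−t₀)⁴ + a₅(t−t₀)⁵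
satisfies g·g'' + (g')² − 3g⁴ − t/2 = o((t−t₀)²) as t → t₀, t ≠ t₀. -/
theorem DPIB_series_residual
    (t₀ a₅ : ℂ) (g : ℂ → ℂ)
    (hg : ∀ t : ℂ, t ≠ t₀ → g t =
      (t - t₀)⁻¹ - (t₀ / 20) * (t - t₀) ^ 3 - (1 / 12) * (t - t₀) ^ 4
        + a₅ * (t - t₀) ^ 5) :
    Tendsto (fun t : ℂ =>
        (g t * deriv (deriv g) t + (deriv g t) ^ 2 - 3 * (g t) ^ 4 - t / 2) / (t - t₀) ^ 2)
      (𝓝[≠] t₀) (𝓝 0) := by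
  have hopen : IsOpen ({t₀}ᶜ : Set ℂ) := isOpen_compl_singleton
  -- first derivative
  have h1 : ∀ t : ℂ, t ≠ t₀ → deriv g t =
      -((t - t₀) ^ 2)⁻¹ - (3 * t₀ / 20) * (t - t₀) ^ 2 - (1 / 3) * (t - t₀) ^ 3
        + 5 * a₅ * (t - t₀) ^ 4 := by
    intro t ht
    have hne : t - t₀ ≠ 0 := sub_ne_zero.mpr ht
    have hev : g =ᶠ[𝓝 t] fun x =>
        (x - t₀)⁻¹ - (t₀ / 20) * (x - t₀) ^ 3 - (1 / 12) * (x - t₀) ^ 4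
          + a₅ * (x - t₀) ^ 5 := by
      filter_upwards [hopen.mem_nhds ht] with x hx using hg x hx
    rw [hev.deriv_eq]
    have hid : HasDerivAt (fun x : ℂ => x - t₀) 1 t := (hasDerivAt_id t).sub_const t₀
    have H := (((hid.inv hne).sub ((hid.pow 3).const_mul (t₀ / 20))).sub
        ((hid.pow 4).const_mul (1 / 12))).add ((hid.pow 5).const_mul a₅)
    rw [HasDerivAt.deriv (f := fun x : ℂ => (x - t₀)⁻¹ - (t₀ / 20) * (x - t₀) ^ 3 - (1 / 12) * (x - t₀) ^ 4
            + a₅ * (x - t₀) ^ 5) H]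
    field_simp
    ring
  -- second derivative
  have h2 : ∀ t : ℂ, t ≠ t₀ → deriv (deriv g) t =
      2 * ((t - t₀) ^ 3)⁻¹ - (3 * t₀ / 10) * (t - t₀) - (t - t₀) ^ 2
        + 20 * a₅ * (t - t₀) ^ 3 := by
    intro t ht
    have hne : t - t₀ ≠ 0 := sub_ne_zero.mpr ht
    have hev : deriv g =ᶠ[𝓝 t] fun x =>
        -((x - t₀) ^ 2)⁻¹ - (3 * t₀ / 20) * (x - t₀) ^ 2 - (1 / 3) * (x - t₀) ^ 3
          + 5 * a₅ * (x - t₀) ^ 4 := by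
      filter_upwards [hopen.mem_nhds ht] with x hx using h1 x hx
    rw [hev.deriv_eq]
    have hid : HasDerivAt (fun x : ℂ => x - t₀) 1 t := (hasDerivAt_id t).sub_const t₀
    have H := ((((((hid.pow 2).inv (pow_ne_zero 2 hne)).neg).sub
        ((hid.pow 2).const_mul (3 * t₀ / 20))).sub
        ((hid.pow 3).const_mul (1 / 3))).add ((hid.pow 4).const_mul (5 * a₅)))
    rw [HasDerivAt.deriv (f := fun x : ℂ => -((x - t₀) ^ 2)⁻¹ - (3 * t₀ / 20) * (x - t₀) ^ 2 - (1 / 3) * (x - t₀) ^ 3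
            + 5 * a₅ * (x - t₀) ^ 4) H]
    simp only [Pi.pow_apply]
    field_simp
    ring
  -- the quotient equals (t - t₀)^2 * P (t - t₀) away from t₀
  have key : ∀ᶠ t in 𝓝[≠] t₀,
      (t - t₀) ^ 2 * DPIB_P t₀ a₅ (t - t₀) =
      (g t * deriv (deriv g) t + (deriv g t) ^ 2 - 3 * (g t) ^ 4 - t / 2) / (t - t₀) ^ 2 := by
    filter_upwards [self_mem_nhdsWithin] with t ht
    have ht' : t ≠ t₀ := ht
    have hne : t - t₀ ≠ 0 := sub_ne_zero.mpr ht'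
    have hv : (t - t₀) * (t - t₀)⁻¹ = 1 := mul_inv_cancel₀ hne
    rw [hg t ht', h1 t ht', h2 t ht', DPIB_P, eq_div_iff (pow_ne_zero 2 hne)]
    simp only [← inv_pow]
    linear_combination (((-1/2:ℂ) * t₀ + (-1/2:ℂ) * (t - t₀) + (-4/5:ℂ) * (t - t₀) * t₀ * (t - t₀)⁻¹ + (-3/2:ℂ) * (t - t₀)^2 * (t - t₀)⁻¹ + (-1/2:ℂ) * (t - t₀)^2 * t₀ * (t - t₀)⁻¹^2 + (-5/6:ℂ) * (t - t₀)^3 * (t - t₀)⁻¹^2 + (20:ℂ) * (t - t₀)^3 * a₅ * (t - t₀)⁻¹ + (10:ℂ) * (t - t₀)^4 * a₅ * (t - t₀)⁻¹^2 + (9/200:ℂ) * (t - t₀)^4 * t₀^2 + (3/20:ℂ) * (t - t₀)^5 * t₀ + (9/200:ℂ) * (t - t₀)^5 * t₀^2 * (t - t₀)⁻¹ + (1/8:ℂ) * (t - t₀)^6 + (3/20:ℂ) * (t - t₀)^6 * t₀ * (t - t₀)⁻¹ + (-9/5:ℂ) * (t - t₀)^6 * t₀ * a₅ + (1/8:ℂ)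 * (t - t₀)^7 * (t - t₀)⁻¹ + (-3:ℂ) * (t - t₀)^7 * a₅ + (-9/5:ℂ) * (t - t₀)^7 * t₀ * a₅ * (t - t₀)⁻¹ + (-3:ℂ) * (t - t₀)^8 * a₅ * (t - t₀)⁻¹ + (18:ℂ) * (t - t₀)^8 * a₅^2 + (-3/2000:ℂ) * (t - t₀)^8 * t₀^3 + (18:ℂ) * (t - t₀)^9 * a₅^2 * (t - t₀)⁻¹ + (-3/400:ℂ) * (t - t₀)^9 * t₀^2 + (-1/80:ℂ) * (t - t₀)^10 * t₀ + (9/100:ℂ) * (t - t₀)^10 * t₀^2 * a₅ + (-1/144:ℂ) * (t - t₀)^11 + (3/10:ℂ) * (t - t₀)^11 * t₀ * a₅ + (1/4:ℂ) * (t - t₀)^12 * a₅ + (-9/5:ℂ) * (t - t₀)^12 * t₀ * a₅^2 + (-3:ℂ) * (t - t₀)^13 * a₅^2 + (12:ℂ) * (t - t₀)^14 * a₅^3)) * hv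
  refine Tendsto.congr' key ?_
  have hc : Tendsto (fun t : ℂ => (t - t₀) ^ 2 * DPIB_P t₀ a₅ (t - t₀)) (𝓝 t₀) (𝓝 0) := by
    have : ContinuousAt (fun t : ℂ => (t - t₀) ^ 2 * DPIB_P t₀ a₅ (t - t₀)) t₀ := by
      unfold DPIB_P; fun_prop
    simpa using this.tendsto
  exact hc.mono_left nhdsWithin_le_nhds
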